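/- Let G be a graph with matching number m. Then for any 1 ≤ k ≤ m, the sum of the k largest signless Laplacian eigenvalues of G satisfies S⁺_k(G) ≤ 2e(G) − 2m + 2k. -/

import Mathlib

open Matrix Polynomial

/-- Sum of the `k` largest entries of a finitely-indexed family of reals. -/
noncomputable def sumKLargest {V : Type*} [Fintype V] (v : V → ℝ) (k : ℕ) : ℝ :=
  (((Finset.univ.val.map v).toList.mergeSort (fun a b => decide (b ≤ a))).take k).sum

open Classical in
/-- The signless Laplacian matrix `Q(G) = D(G) + A(G)` of a simple graph. -/
noncomputable def signlessLap {V : Type*} [Fintype V] [DecidableEq V]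
    (G : SimpleGraph V) : Matrix V V ℝ :=
  G.degMatrix ℝ + G.adjMatrix ℝ

theorem signlessLap_isHermitian {V : Type*} [Fintype V] [DecidableEq V]
    (G : SimpleGraph V) : (signlessLap G).IsHermitian := by
  classical
  ext i j
  by_cases h : i = j
  · subst h; simp [signlessLap]
  · simp [signlessLap, Matrix.conjTranspose_apply, SimpleGraph.degMatrix,
      Matrix.diagonal_apply, h, Ne.symm h, SimpleGraph.adj_comm]

/-- `S⁺_k(G)`: the sum of the `k` largest signless Laplacian eigenvalues of `G`. -/
noncomputable def Splus {V : Type*} [Fintype V] [DecidableEq V]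
    (G : SimpleGraph V) (k : ℕ) : ℝ :=
  sumKLargest (signlessLap_isHermitian G).eigenvalues k

/-- `e(G)`: the number of edges of `G`. -/
noncomputable def numEdges {V : Type*} (G : SimpleGraph V) : ℕ := G.edgeSet.ncard


/-- The matching number of `G`: the maximum number of pairwise disjoint edges. -/
noncomputable def matchingNumber {V : Type*} [Fintype V] [DecidableEq V]
    (G : SimpleGraph V) : ℕ :=
  sSup {m | ∃ M : Finset (Sym2 V), ↑M ⊆ G.edgeSet ∧
    (M : Set (Sym2 V)).Pairwise (fun e f => ∀ v : V, ¬(v ∈ e ∧ v ∈ f)) ∧ M.card = m}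


lemma two_mul_length_le_sum (l : List ℝ) (h : ∀ x ∈ l, (2:ℝ) ≤ x) :
    2 * l.length ≤ l.sum := by
  induction l with
  | nil => simp
  | cons a t ih =>
    simp only [List.length_cons, List.sum_cons, Nat.cast_add, Nat.cast_one]
    have := ih (fun x hx => h x (List.mem_cons_of_mem _ hx))
    have ha := h a List.mem_cons_self
    nlinarith

lemma take_sum_le (L : List ℝ) (hs : L.Pairwise (fun a b : ℝ => b ≤ a))
    (h0 : ∀ x ∈ L, (0:ℝ) ≤ x) (m k : ℕ) (hk : k ≤ m)
    (hm : m ≤ L.countP (fun a => decide ((2:ℝ) ≤ a))) :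
    (L.take k).sum ≤ L.sum - 2 * m + 2 * k := by
  have hlen : m ≤ L.length := hm.trans List.countP_le_length
  have key : ∀ i : ℕ, i < m → ∀ hi : i < L.length, (2:ℝ) ≤ L[i] := by
    intro i him hi
    by_contra hlt
    push_neg at hlt
    have hdropPw : (L.drop i).Pairwise (fun a b : ℝ => b ≤ a) :=
      hs.sublist (List.drop_sublist i L)
    have hcons : L.drop i = L[i] :: L.drop (i+1) := List.drop_eq_getElem_cons hi
    rw [hcons, List.pairwise_cons] at hdropPw
    have hsmall : ∀ x ∈ L.drop i, x < 2 := by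
      intro x hx
      rw [hcons] at hx
      rcases List.mem_cons.mp hx with h | h
      · rw [h]; exact hlt
      · exact lt_of_le_of_lt (hdropPw.1 x h) hlt
    have hzero : (L.drop i).countP (fun a => decide ((2:ℝ) ≤ a)) = 0 := by
      rw [List.countP_eq_zero]
      intro a ha
      simpa using not_le.mpr (hsmall a ha)
    have hsplit : L.countP (fun a => decide ((2:ℝ) ≤ a)) =
        (L.take i).countP (fun a => decide ((2:ℝ) ≤ a)) +
        (L.drop i).countP (fun a => decide ((2:ℝ) ≤ a)) := by
      conv_lhs => rw [← List.take_append_drop i L]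
      exact List.countP_append
    have : m ≤ i := by
      calc m ≤ _ := hm
        _ = _ := hsplit
        _ ≤ (L.take i).length + 0 := by
            rw [hzero]; exact Nat.add_le_add_right List.countP_le_length 0
        _ ≤ i := by simp [List.length_take]
    omega
  set d := L.drop k with hd
  have hdlen : d.length = L.length - k := List.length_drop
  have hsum : L.sum = (L.take k).sum + d.sum := by
    conv_lhs => rw [← List.take_append_drop k L]
    exact List.sum_append
  have htlen : (d.take (m - k)).length = m - k := by
    rw [List.length_take]
    omega
  have htake2 : ∀ x ∈ d.take (m - k), (2:ℝ) ≤ x := by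
    intro x hx
    rw [List.mem_iff_getElem] at hx
    obtain ⟨j, hj, rfl⟩ := hx
    simp only [List.getElem_take, hd, List.getElem_drop]
    refine key (k + j) ?_ _
    rw [htlen] at hj
    omega
  have h2 : 2 * ((m:ℝ) - k) ≤ (d.take (m - k)).sum := by
    have := two_mul_length_le_sum _ htake2
    rw [htlen] at this
    rw [Nat.cast_sub hk] at this
    exact this
  have h3 : (0:ℝ) ≤ (d.drop (m - k)).sum :=
    List.sum_nonneg (fun x hx => h0 x (List.mem_of_mem_drop (List.mem_of_mem_drop hx)))
  have hdsum : d.sum = (d.take (m-k)).sum + (d.drop (m-k)).sum := by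
    conv_lhs => rw [← List.take_append_drop (m-k) d]
    exact List.sum_append
  linarith

noncomputable def chiV {V : Type*} [DecidableEq V] (e : Sym2 V) : V → ℝ :=
  fun v => if v ∈ e then 1 else 0

open Classical in
lemma signlessLap_eq_sum {V : Type*} [Fintype V] [DecidableEq V] (G : SimpleGraph V) :
    signlessLap G = ∑ e ∈ G.edgeFinset, vecMulVec (chiV e) (chiV e) := by
  classical
  ext u v
  rw [Matrix.sum_apply]
  have hterm : ∀ e, vecMulVec (chiV e) (chiV e) u v = if u ∈ e ∧ v ∈ e then (1:ℝ) else 0 := by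
    intro e
    rw [vecMulVec_apply]
    unfold chiV
    by_cases hu : u ∈ e <;> by_cases hv : v ∈ e <;> simp [hu, hv]
  simp only [hterm]
  rw [Finset.sum_boole]
  by_cases huv : u = v
  · subst huv
    have hfil : {e ∈ G.edgeFinset | u ∈ e ∧ u ∈ e} = G.incidenceFinset u := by
      rw [G.incidenceFinset_eq_filter u]
      simp
    rw [hfil, SimpleGraph.card_incidenceFinset_eq_degree]
    simp [signlessLap, SimpleGraph.degMatrix, Matrix.diagonal_apply_eq]
  · have hfil : {e ∈ G.edgeFinset | u ∈ e ∧ v ∈ e} =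
        if G.Adj u v then {s(u,v)} else ∅ := by
      ext e
      simp only [Finset.mem_filter, SimpleGraph.mem_edgeFinset]
      rw [Sym2.mem_and_mem_iff huv]
      by_cases hadj : G.Adj u v
      · simp only [hadj, if_true, Finset.mem_singleton]
        constructor
        · rintro ⟨_, h⟩; exact h
        · rintro rfl; exact ⟨G.mem_edgeSet.mpr hadj, rfl⟩
      · simp only [hadj, if_false, Finset.notMem_empty, iff_false]
        rintro ⟨hmem, rfl⟩
        exact hadj (G.mem_edgeSet.mp hmem)
    rw [hfil]
    by_cases hadj : G.Adj u v <;>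
      simp [hadj, signlessLap, SimpleGraph.degMatrix, Matrix.diagonal_apply_ne _ huv]

lemma chiV_card {V : Type*} [Fintype V] [DecidableEq V] {G : SimpleGraph V} {e : Sym2 V}
    (he : e ∈ G.edgeSet) : ({v : V | v ∈ e} : Finset V).card = 2 := by
  induction e with
  | _ a b =>
    have hab : a ≠ b := (G.mem_edgeSet.mp he).ne
    have : ({v : V | v ∈ s(a,b)} : Finset V) = {a, b} := by
      ext w
      simp [Sym2.mem_iff]
    rw [this, Finset.card_insert_of_notMem (by simp [hab]), Finset.card_singleton]

lemma chiV_dot_self {V : Type*} [Fintype V] [DecidableEq V] {G : SimpleGraph V} {e : Sym2 V}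
    (he : e ∈ G.edgeSet) : chiV e ⬝ᵥ chiV e = 2 := by
  classical
  unfold chiV dotProduct
  have h1 : ∀ v : V, (if v ∈ e then (1:ℝ) else 0) * (if v ∈ e then 1 else 0)
      = if v ∈ e then 1 else 0 := by intro v; by_cases h : v ∈ e <;> simp [h]
  simp only [h1]
  rw [Finset.sum_boole, chiV_card he]
  norm_num

lemma dot_sum_mulVec {V ι : Type*} [Fintype V] (s : Finset ι) (M : ι → Matrix V V ℝ)
    (x : V → ℝ) : x ⬝ᵥ ((∑ e ∈ s, M e) *ᵥ x) = ∑ e ∈ s, x ⬝ᵥ (M e *ᵥ x) := by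
  classical
  induction s using Finset.induction_on with
  | empty => simp
  | insert _ _ hnot ih =>
    rw [Finset.sum_insert hnot, Finset.sum_insert hnot, Matrix.add_mulVec, dotProduct_add, ih]

lemma dot_vecMulVec {V : Type*} [Fintype V] (w x : V → ℝ) :
    x ⬝ᵥ (vecMulVec w w *ᵥ x) = (w ⬝ᵥ x)^2 := by
  have h : vecMulVec w w *ᵥ x = (w ⬝ᵥ x) • w := by
    ext u
    simp only [mulVec, vecMulVec_apply, dotProduct, Pi.smul_apply, smul_eq_mul,
      Finset.sum_mul, Finset.mul_sum]
    exact Finset.sum_congr rfl (fun v _ => by ring)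
  rw [h, dotProduct_smul, smul_eq_mul, dotProduct_comm]
  ring

open Classical in
lemma signlessLap_posSemidef {V : Type*} [Fintype V] [DecidableEq V] (G : SimpleGraph V) :
    (signlessLap G).PosSemidef := by
  classical
  refine Matrix.PosSemidef.of_dotProduct_mulVec_nonneg (signlessLap_isHermitian G) (fun x => ?_)
  rw [show (star x : V → ℝ) = x from star_trivial x]
  rw [signlessLap_eq_sum, dot_sum_mulVec]
  refine Finset.sum_nonneg (fun e _ => ?_)
  rw [dot_vecMulVec]
  positivity

open Classical in
lemma trace_signlessLap {V : Type*} [Fintype V] [DecidableEq V] (G : SimpleGraph V) :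
    (signlessLap G).trace = 2 * (G.edgeFinset.card : ℝ) := by
  classical
  rw [signlessLap_eq_sum, Matrix.trace_sum]
  have h : ∀ e ∈ G.edgeFinset, (vecMulVec (chiV e) (chiV e)).trace = (2:ℝ) := by
    intro e he
    rw [Matrix.trace]
    have : ∀ i : V, (vecMulVec (chiV e) (chiV e)).diag i = chiV e i * chiV e i := fun i => rfl
    simp only [this]
    exact chiV_dot_self (SimpleGraph.mem_edgeFinset.mp he)
  rw [Finset.sum_congr rfl h, Finset.sum_const, nsmul_eq_mul]
  ring

section spectral
variable {V : Type*} [Fintype V] [DecidableEq V] {A : Matrix V V ℝ} (hA : A.IsHermitian)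

lemma star_unitary_eq_transpose :
    star (hA.eigenvectorUnitary : Matrix V V ℝ) = (hA.eigenvectorUnitary : Matrix V V ℝ)ᵀ := by
  ext i j
  simp [Matrix.star_apply, Matrix.transpose_apply]

lemma dot_mulVec_unitary (x w : V → ℝ) :
    x ⬝ᵥ ((hA.eigenvectorUnitary : Matrix V V ℝ) *ᵥ w)
      = (star (hA.eigenvectorUnitary : Matrix V V ℝ) *ᵥ x) ⬝ᵥ w := by
  rw [dotProduct_mulVec, star_unitary_eq_transpose, Matrix.mulVec_transpose]

lemma quad_form_eigen (x : V → ℝ) :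
    x ⬝ᵥ (A *ᵥ x) = ∑ i, hA.eigenvalues i *
      ((star (hA.eigenvectorUnitary : Matrix V V ℝ) *ᵥ x) i)^2 := by
  set U : Matrix V V ℝ := (hA.eigenvectorUnitary : Matrix V V ℝ) with hU
  set y : V → ℝ := star U *ᵥ x with hy
  conv_lhs => rw [hA.spectral_theorem, Unitary.conjStarAlgAut_apply]
  rw [← Matrix.mulVec_mulVec, ← Matrix.mulVec_mulVec, dot_mulVec_unitary hA, ← hy]
  have hD : (Matrix.diagonal (RCLike.ofReal ∘ hA.eigenvalues) : Matrix V V ℝ) *ᵥ y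
      = fun i => hA.eigenvalues i * y i := by
    ext i
    rw [Matrix.mulVec_diagonal]
    simp
  rw [hD, dotProduct]
  exact Finset.sum_congr rfl (fun i _ => by ring)

lemma dot_self_eigen (x : V → ℝ) :
    x ⬝ᵥ x = ∑ i, ((star (hA.eigenvectorUnitary : Matrix V V ℝ) *ᵥ x) i)^2 := by
  set U : Matrix V V ℝ := (hA.eigenvectorUnitary : Matrix V V ℝ) with hU
  set y : V → ℝ := star U *ᵥ x with hy
  have h2 : U * star U = 1 := by
    have := hA.eigenvectorUnitary.2
    rw [Unitary.mem_iff] at this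
    exact this.2
  have hx : U *ᵥ y = x := by
    rw [hy, Matrix.mulVec_mulVec, h2, Matrix.one_mulVec]
  calc x ⬝ᵥ x = x ⬝ᵥ (U *ᵥ y) := by rw [hx]
    _ = y ⬝ᵥ y := by rw [dot_mulVec_unitary hA, ← hy]
    _ = ∑ i, y i ^ 2 := by
        rw [dotProduct]; exact Finset.sum_congr rfl (fun i _ => by ring)

lemma mulVec_star_unitary_injective (x : V → ℝ)
    (h : star (hA.eigenvectorUnitary : Matrix V V ℝ) *ᵥ x = 0) : x = 0 := by
  have h2 : (hA.eigenvectorUnitary : Matrix V V ℝ) * star (hA.eigenvectorUnitary : Matrix V V ℝ) = 1 := by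
    have := hA.eigenvectorUnitary.2
    rw [Unitary.mem_iff] at this
    exact this.2
  have := congrArg (fun v => (hA.eigenvectorUnitary : Matrix V V ℝ) *ᵥ v) h
  simpa [Matrix.mulVec_mulVec, h2, Matrix.one_mulVec] using this

lemma sum_eigenvalues_eq_trace' : ∑ i, hA.eigenvalues i = A.trace := by
  have h1 : star (hA.eigenvectorUnitary : Matrix V V ℝ) * hA.eigenvectorUnitary = 1 := by
    have := hA.eigenvectorUnitary.2
    rw [Unitary.mem_iff] at this
    exact this.1
  conv_rhs => rw [hA.spectral_theorem, Unitary.conjStarAlgAut_apply]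
  rw [Matrix.trace_mul_cycle, h1, Matrix.one_mul, Matrix.trace_diagonal]
  simp

end spectral

lemma dotProduct_finset_sum {V ι : Type*} [Fintype V] (w : V → ℝ) (s : Finset ι)
    (g : ι → V → ℝ) : w ⬝ᵥ (∑ f ∈ s, g f) = ∑ f ∈ s, w ⬝ᵥ g f := by
  classical
  induction s using Finset.induction_on with
  | empty => simp
  | insert _ _ hnot ih => rw [Finset.sum_insert hnot, Finset.sum_insert hnot, dotProduct_add, ih]

lemma chiV_dot_chiV_disjoint {V : Type*} [Fintype V] [DecidableEq V] {e f : Sym2 V}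
    (h : ∀ v : V, ¬(v ∈ e ∧ v ∈ f)) : chiV e ⬝ᵥ chiV f = 0 := by
  classical
  unfold chiV dotProduct
  refine Finset.sum_eq_zero (fun v _ => ?_)
  by_cases hv : v ∈ e
  · have : v ∉ f := fun hf => h v ⟨hv, hf⟩
    simp [hv, this]
  · simp [hv]

open Classical in
lemma count_eigen_ge {V : Type*} [Fintype V] [DecidableEq V] (G : SimpleGraph V)
    (M : Finset (Sym2 V)) (hME : ↑M ⊆ G.edgeSet)
    (hMP : (M : Set (Sym2 V)).Pairwise (fun e f => ∀ v : V, ¬(v ∈ e ∧ v ∈ f))) :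
    M.card ≤ (Finset.univ.filter
      (fun i => 2 ≤ (signlessLap_isHermitian G).eigenvalues i)).card := by
  classical
  by_contra hcon
  push_neg at hcon
  set hQ := signlessLap_isHermitian G with hhQ
  set lam := hQ.eigenvalues with hlam
  set U : Matrix V V ℝ := (hQ.eigenvectorUnitary : Matrix V V ℝ) with hU
  set S : Finset V := Finset.univ.filter (fun i => 2 ≤ lam i) with hS
  set n := Fintype.card V with hn
  set m := M.card with hm
  -- the span of the indicator vectors of the matching edges
  set W : Submodule ℝ (V → ℝ) :=
    Submodule.span ℝ (Set.range (fun e : ↥M => chiV (e : Sym2 V))) with hW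
  have hindep : LinearIndependent ℝ (fun e : ↥M => chiV (e : Sym2 V)) := by
    rw [Fintype.linearIndependent_iff]
    intro g hg e
    obtain ⟨a, b, hab⟩ : ∃ a b, G.Adj a b ∧ (e : Sym2 V) = s(a, b) := by
      have hmem := hME e.2
      revert hmem
      induction (e : Sym2 V) with
      | _ a b => exact fun hmem => ⟨a, b, G.mem_edgeSet.mp hmem, rfl⟩
    have ha : a ∈ (e : Sym2 V) := by rw [hab.2]; exact Sym2.mem_mk_left a b
    have := congrFun hg a
    rw [Finset.sum_apply] at this
    rw [show (0 : V → ℝ) a = 0 from rfl] at this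
    rw [Finset.sum_eq_single e] at this
    · simpa [chiV, ha] using this
    · intro f _ hfe
      have hdisj := hMP f.2 e.2 (fun hh => hfe (Subtype.ext hh))
      have hnaf : a ∉ (f : Sym2 V) := fun haf => hdisj a ⟨haf, ha⟩
      simp [chiV, hnaf]
    · intro he'; exact absurd (Finset.mem_univ e) he'
  have hWrank : Module.finrank ℝ W = m := by
    rw [hW, finrank_span_eq_card hindep, Fintype.card_coe]
  -- the kernel of the coordinates indexed by S
  set Φ : (V → ℝ) →ₗ[ℝ] (↥S → ℝ) :=
    (LinearMap.funLeft ℝ ℝ (fun i : ↥S => (i : V))).comp (Matrix.mulVecLin (star U)) with hPhi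
  set K := LinearMap.ker Φ with hK
  have hKrank : n - S.card ≤ Module.finrank ℝ K := by
    have h1 := LinearMap.finrank_range_add_finrank_ker Φ
    have h2 : Module.finrank ℝ (LinearMap.range Φ) ≤ S.card := by
      have := Submodule.finrank_le (LinearMap.range Φ)
      rwa [Module.finrank_pi ℝ, Fintype.card_coe] at this
    have h3 : Module.finrank ℝ (V → ℝ) = n := by rw [Module.finrank_pi ℝ]
    rw [← hK] at h1
    omega
  have hsup : Module.finrank ℝ ↥(W ⊔ K) ≤ n := by
    have := Submodule.finrank_le (W ⊔ K)
    rwa [Module.finrank_pi ℝ] at this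
  have hinf : 0 < Module.finrank ℝ ↥(W ⊓ K) := by
    have := Submodule.finrank_sup_add_finrank_inf_eq W K
    have hr : S.card < m := hcon
    omega
  obtain ⟨⟨x, hx⟩, hxne⟩ := Module.finrank_pos_iff_exists_ne_zero.mp hinf
  have hxW : x ∈ W := hx.1
  have hxK : x ∈ K := hx.2
  have hxne' : x ≠ 0 := fun h => hxne (by simp [h])
  -- y coordinates vanish on S
  set y : V → ℝ := star U *ᵥ x with hy
  have hyS : ∀ i : V, 2 ≤ lam i → y i = 0 := by
    intro i hi
    have : Φ x = 0 := hxK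
    have := congrFun this ⟨i, by simp [hS, hi]⟩
    simpa [hPhi, LinearMap.funLeft, hy] using this
  have hyne : y ≠ 0 := by
    intro h
    exact hxne' (mulVec_star_unitary_injective hQ x h)
  -- quadratic form bounds
  have hquad : x ⬝ᵥ (signlessLap G *ᵥ x) = ∑ i, lam i * (y i)^2 := quad_form_eigen hQ x
  have hdotself : x ⬝ᵥ x = ∑ i, (y i)^2 := dot_self_eigen hQ x
  -- upper bound (from the kernel)
  have hupper : x ⬝ᵥ (signlessLap G *ᵥ x) < 2 * (x ⬝ᵥ x) := by
    rw [hquad, hdotself, Finset.mul_sum]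
    obtain ⟨j, hj⟩ := Function.ne_iff.mp hyne
    refine Finset.sum_lt_sum (fun i _ => ?_) ⟨j, Finset.mem_univ j, ?_⟩
    · by_cases hi : 2 ≤ lam i
      · rw [hyS i hi]; simp
      · push_neg at hi
        nlinarith [sq_nonneg (y i)]
    · have hj2 : ¬ (2 ≤ lam j) := fun h => hj (hyS j h)
      push_neg at hj2
      have : (0:ℝ) < (y j)^2 :=
        lt_of_le_of_ne (sq_nonneg _) (Ne.symm (pow_ne_zero 2 hj))
      nlinarith
  -- lower bound (from the matching)
  have hlower : 2 * (x ⬝ᵥ x) ≤ x ⬝ᵥ (signlessLap G *ᵥ x) := by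
    obtain ⟨c, hc⟩ := Submodule.mem_span_range_iff_exists_fun ℝ |>.mp hxW
    have hdot : ∀ e : ↥M, chiV (e : Sym2 V) ⬝ᵥ x = 2 * c e := by
      intro e
      rw [← hc, dotProduct_finset_sum]
      rw [Finset.sum_eq_single e]
      · rw [dotProduct_smul, chiV_dot_self (hME e.2), smul_eq_mul]; ring
      · intro f _ hfe
        rw [dotProduct_smul, chiV_dot_chiV_disjoint
          (hMP e.2 f.2 (fun hh => hfe (Subtype.ext hh.symm)))]
        simp
      · intro h; exact absurd (Finset.mem_univ e) h
    have hxx : x ⬝ᵥ x = 2 * ∑ e : ↥M, (c e)^2 := by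
      nth_rewrite 2 [← hc]
      rw [dotProduct_finset_sum, Finset.mul_sum]
      refine Finset.sum_congr rfl (fun e _ => ?_)
      rw [dotProduct_smul, smul_eq_mul, dotProduct_comm, hdot e]
      ring
    have hQx : ∑ e : ↥M, 4 * (c e)^2 ≤ x ⬝ᵥ (signlessLap G *ᵥ x) := by
      rw [signlessLap_eq_sum, dot_sum_mulVec]
      have hsub : M ⊆ G.edgeFinset := fun e he => SimpleGraph.mem_edgeFinset.mpr (hME he)
      have : ∑ e : ↥M, 4 * (c e)^2 = ∑ e ∈ M, x ⬝ᵥ (vecMulVec (chiV e) (chiV e) *ᵥ x) := by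
        rw [← Finset.sum_coe_sort M]
        refine Finset.sum_congr rfl (fun e _ => ?_)
        rw [dot_vecMulVec, hdot e]
        ring
      rw [this]
      refine Finset.sum_le_sum_of_subset_of_nonneg hsub (fun e _ _ => ?_)
      rw [dot_vecMulVec]
      positivity
    calc 2 * (x ⬝ᵥ x) = ∑ e : ↥M, 4 * (c e)^2 := by
          rw [hxx, ← mul_assoc, Finset.mul_sum]
          norm_num
      _ ≤ _ := hQx
  linarith

/-- If `G` has matching number `m`, then for any `1 ≤ k ≤ m`,
`S⁺_k(G) ≤ 2e(G) − 2m + 2k`. -/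
theorem splus_le_of_matchingNumber {V : Type*} [Fintype V] [DecidableEq V]
    (G : SimpleGraph V) (m : ℕ) (hm : matchingNumber G = m)
    (k : ℕ) (hk1 : 1 ≤ k) (hkm : k ≤ m) :
    Splus G k ≤ 2 * (numEdges G : ℝ) - 2 * (m : ℝ) + 2 * k := by
  classical
  -- extract a matching of size m
  have hmem : m ∈ {m | ∃ M : Finset (Sym2 V), ↑M ⊆ G.edgeSet ∧
      (M : Set (Sym2 V)).Pairwise (fun e f => ∀ v : V, ¬(v ∈ e ∧ v ∈ f)) ∧ M.card = m} := by
    rw [← hm, matchingNumber]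
    apply Nat.sSup_mem
    · exact ⟨0, ∅, by simp⟩
    · refine ⟨Fintype.card (Sym2 V), ?_⟩
      rintro x ⟨M, _, _, hcard⟩
      exact hcard ▸ Finset.card_le_univ M
  obtain ⟨M, hME, hMP, hMcard⟩ := hmem
  set hQ := signlessLap_isHermitian G with hhQ
  set lam := hQ.eigenvalues with hlam
  set l : List ℝ := (Finset.univ.val.map lam).toList with hl
  set L : List ℝ := l.mergeSort (fun a b => decide (b ≤ a)) with hL
  have hperm : List.Perm L l := List.mergeSort_perm l _
  have hsorted : L.Pairwise (fun a b : ℝ => b ≤ a) := by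
    have := List.pairwise_mergeSort (le := fun a b : ℝ => decide (b ≤ a))
      (fun a b c hab hbc => by
        simp only [decide_eq_true_eq] at *
        exact hbc.trans hab)
      (fun a b => by
        simp only [Bool.or_eq_true, decide_eq_true_eq]
        exact le_total b a) l
    exact this.imp (fun h => of_decide_eq_true h)
  have h0 : ∀ x ∈ L, (0:ℝ) ≤ x := by
    intro x hx
    rw [List.mem_mergeSort] at hx
    rw [hl, Multiset.mem_toList, Multiset.mem_map] at hx
    obtain ⟨i, _, rfl⟩ := hx
    exact (signlessLap_posSemidef G).eigenvalues_nonneg i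
  have hcount : m ≤ L.countP (fun a => decide ((2:ℝ) ≤ a)) := by
    have h1 : L.countP (fun a => decide ((2:ℝ) ≤ a))
        = l.countP (fun a => decide ((2:ℝ) ≤ a)) := hperm.countP_eq _
    have h2 : l.countP (fun a => decide ((2:ℝ) ≤ a))
        = Multiset.countP (fun a : ℝ => 2 ≤ a) (Finset.univ.val.map lam) := by
      rw [← Multiset.coe_countP, hl, Multiset.coe_toList]
    have h3 : Multiset.countP (fun a : ℝ => 2 ≤ a) (Finset.univ.val.map lam)
        = (Finset.univ.filter (fun i => 2 ≤ lam i)).card := by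
      rw [Multiset.countP_map]
      rfl
    rw [h1, h2, h3]
    exact hMcard ▸ count_eigen_ge G M hME hMP
  have hsum : L.sum = 2 * (numEdges G : ℝ) := by
    rw [hperm.sum_eq, hl, Multiset.sum_toList]
    have : (Finset.univ.val.map lam).sum = ∑ i, lam i := rfl
    rw [this, hlam, hhQ, sum_eigenvalues_eq_trace', trace_signlessLap]
    have : numEdges G = G.edgeFinset.card := by
      rw [numEdges, Set.ncard_eq_toFinset_card']
      congr 1
    rw [this]
  have := take_sum_le L hsorted h0 m k hkm hcount
  rw [hsum] at this
  exact this
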